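/- For every T > 0 there exists C_T < ∞ such that for all t ∈ [0,T] and all u, v ∈ ℝ with u ≠ v, |φ_t(2u) − φ_t(2v)|/(2|u−v|) ≤ C_T (1/(1+|u|) + 1/(1+|v|)) · 1/(1+|u−v|), where φ_t(w) = (1 − e^{itw})/w for w ≠ 0 and φ_t(0) = −it. -/

import Mathlib

open Complex intervalIntegral

noncomputable def phi (t x : ℝ) : ℂ :=
  if x = 0 then -Complex.I * t else (1 - Complex.exp (Complex.I * t * x)) / x

lemma phi_eq (t x : ℝ) :
    phi t x = ∫ s in (0:ℝ)..t, -Complex.I * Complex.exp (Complex.I * x * s) := by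
  by_cases hx : x = 0
  · simp [phi, hx, intervalIntegral.integral_const, Complex.real_smul]
    ring
  · have hx' : (x:ℂ) ≠ 0 := by exact_mod_cast hx
    have hc : Complex.I * (x:ℂ) ≠ 0 := mul_ne_zero Complex.I_ne_zero hx'
    rw [intervalIntegral.integral_const_mul, integral_exp_mul_complex hc]
    simp only [phi, hx, if_false, Complex.ofReal_zero, mul_zero, Complex.exp_zero]
    field_simp
    ring_nf

lemma exp_I_abs (x : ℝ) : ‖Complex.exp (Complex.I * x)‖ = 1 := by
  rw [show Complex.I * (x:ℂ) = (x:ℂ) * Complex.I by ring, Complex.norm_exp_ofReal_mul_I]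

lemma exp_sub_exp (a b : ℝ) :
    ‖Complex.exp (Complex.I * a) - Complex.exp (Complex.I * b)‖ ≤ |a - b| := by
  have h := integral_exp_mul_complex (a := b) (b := a) (c := Complex.I) Complex.I_ne_zero
  have he : Complex.exp (Complex.I * a) - Complex.exp (Complex.I * b)
      = Complex.I * ∫ s in b..a, Complex.exp (Complex.I * s) := by
    rw [h, mul_div_cancel₀ _ Complex.I_ne_zero]
  rw [he, norm_mul, Complex.norm_I, one_mul]
  calc ‖∫ s in b..a, Complex.exp (Complex.I * s)‖ ≤ 1 * |a - b| := by
        apply intervalIntegral.norm_integral_le_of_norm_le_const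
        intro s _
        rw [exp_I_abs]
    _ = |a - b| := one_mul _

lemma phi_abs_le {t : ℝ} (ht : 0 ≤ t) (x : ℝ) : ‖phi t x‖ ≤ t := by
  rw [phi_eq]
  calc ‖∫ s in (0:ℝ)..t, -Complex.I * Complex.exp (Complex.I * x * s)‖ ≤ 1 * |t - 0| := by
        apply intervalIntegral.norm_integral_le_of_norm_le_const
        intro s _
        rw [norm_mul, norm_neg, Complex.norm_I, one_mul,
          show Complex.I * (x:ℂ) * s = Complex.I * ((x*s : ℝ) : ℂ) by push_cast; ring, exp_I_abs]
    _ = t := by rw [sub_zero, _root_.abs_of_nonneg ht, one_mul]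

lemma phi_abs_le' {t x : ℝ} (hx : x ≠ 0) : ‖phi t x‖ ≤ 2 / |x| := by
  have hx' : (x:ℂ) ≠ 0 := by exact_mod_cast hx
  rw [phi, if_neg hx, norm_div, Complex.norm_real, Real.norm_eq_abs]
  have h2 : ‖1 - Complex.exp (Complex.I * t * x)‖ ≤ 2 := by
    calc ‖1 - Complex.exp (Complex.I * t * x)‖ ≤ ‖(1:ℂ)‖ + ‖Complex.exp (Complex.I * t * x)‖ := by
          exact norm_sub_le _ _
      _ = 2 := by
          rw [norm_one, show Complex.I * (t:ℂ) * x = Complex.I * ((t*x : ℝ):ℂ) by push_cast; ring,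
            exp_I_abs]; norm_num
  gcongr


lemma phi_lip {t : ℝ} (ht : 0 ≤ t) (x y : ℝ) :
    ‖phi t x - phi t y‖ ≤ t ^ 2 * |x - y| := by
  have hi : ∀ z : ℝ, IntervalIntegrable
      (fun s : ℝ => -Complex.I * Complex.exp (Complex.I * z * s)) MeasureTheory.volume 0 t := by
    intro z
    apply Continuous.intervalIntegrable
    exact continuous_const.mul ((Complex.continuous_exp).comp (by fun_prop))
  rw [phi_eq, phi_eq, ← intervalIntegral.integral_sub (hi x) (hi y)]
  calc ‖∫ s in (0:ℝ)..t, (-Complex.I * Complex.exp (Complex.I * x * s)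
        - -Complex.I * Complex.exp (Complex.I * y * s))‖ ≤ (t * |x - y|) * |t - 0| := by
        apply intervalIntegral.norm_integral_le_of_norm_le_const
        intro s hs
        rw [Set.uIoc_of_le ht] at hs
        have hs0 : 0 ≤ s := le_of_lt hs.1
        have hst : s ≤ t := hs.2
        rw [show -Complex.I * Complex.exp (Complex.I * x * s)
            - -Complex.I * Complex.exp (Complex.I * y * s)
            = -Complex.I * (Complex.exp (Complex.I * ((x*s : ℝ):ℂ)) - Complex.exp (Complex.I * ((y*s : ℝ):ℂ))) by
          push_cast; ring]
        rw [norm_mul, norm_neg, Complex.norm_I, one_mul]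
        calc ‖Complex.exp (Complex.I * ((x*s : ℝ):ℂ)) - Complex.exp (Complex.I * ((y*s : ℝ):ℂ))‖
            ≤ |x * s - y * s| := exp_sub_exp _ _
          _ = |x - y| * |s| := by rw [← sub_mul, abs_mul]
          _ ≤ |x - y| * t := by
              have : |s| = s := abs_of_nonneg hs0
              nlinarith [abs_nonneg (x - y)]
          _ = t * |x - y| := mul_comm _ _
    _ = t ^ 2 * |x - y| := by rw [sub_zero, _root_.abs_of_nonneg ht]; ring

lemma phi_decomp {t x y : ℝ} (ht : 0 ≤ t) (hx : x ≠ 0) (hy : y ≠ 0) :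
    ‖phi t x - phi t y‖ ≤ 2 * |x - y| / (|x| * |y|) + t * |x - y| / |y| := by
  have hx' : (x:ℂ) ≠ 0 := by exact_mod_cast hx
  have hy' : (y:ℂ) ≠ 0 := by exact_mod_cast hy
  have hid : phi t x - phi t y
      = (1 - Complex.exp (Complex.I * t * x)) * ((y:ℂ) - x) / (x * y)
        + (Complex.exp (Complex.I * t * y) - Complex.exp (Complex.I * t * x)) / y := by
    rw [phi, phi, if_neg hx, if_neg hy]
    field_simp
    ring
  rw [hid]
  have h2 : ‖1 - Complex.exp (Complex.I * t * x)‖ ≤ 2 := by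
    calc ‖1 - Complex.exp (Complex.I * t * x)‖
        ≤ ‖(1:ℂ)‖ + ‖Complex.exp (Complex.I * t * x)‖ := by
          exact norm_sub_le _ _
      _ = 2 := by
          rw [norm_one, show Complex.I * (t:ℂ) * x = Complex.I * ((t*x : ℝ):ℂ) by push_cast; ring,
            exp_I_abs]; norm_num
  have h3 : ‖Complex.exp (Complex.I * t * y) - Complex.exp (Complex.I * t * x)‖
      ≤ t * |x - y| := by
    rw [show Complex.I * (t:ℂ) * y = Complex.I * ((t*y : ℝ):ℂ) by push_cast; ring,
      show Complex.I * (t:ℂ) * x = Complex.I * ((t*x : ℝ):ℂ) by push_cast; ring]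
    calc ‖Complex.exp (Complex.I * ((t*y : ℝ):ℂ)) - Complex.exp (Complex.I * ((t*x : ℝ):ℂ))‖
        ≤ |t * y - t * x| := exp_sub_exp _ _
      _ = t * |x - y| := by rw [← mul_sub, abs_mul, _root_.abs_of_nonneg ht, abs_sub_comm]
  calc ‖(1 - Complex.exp (Complex.I * t * x)) * ((y:ℂ) - x) / (x * y)
        + (Complex.exp (Complex.I * t * y) - Complex.exp (Complex.I * t * x)) / y‖
      ≤ ‖(1 - Complex.exp (Complex.I * t * x)) * ((y:ℂ) - x) / (x * y)‖
        + ‖(Complex.exp (Complex.I * t * y) - Complex.exp (Complex.I * t * x)) / y‖ := by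
        exact norm_add_le _ _
    _ ≤ 2 * |x - y| / (|x| * |y|) + t * |x - y| / |y| := by
        gcongr ?_ + ?_
        · rw [show (y:ℂ) - x = ((y - x : ℝ):ℂ) by push_cast; ring, norm_div, norm_mul, norm_mul,
            Complex.norm_real, Real.norm_eq_abs, Complex.norm_real, Real.norm_eq_abs, Complex.norm_real, Real.norm_eq_abs, abs_sub_comm y x]
          gcongr <;> first | exact (abs_pos.mpr hx).le | exact (abs_pos.mpr hy).le | exact h2
        · rw [norm_div, Complex.norm_real, Real.norm_eq_abs]
          gcongr <;> first | exact abs_pos.mpr hy | exact h3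

lemma key_bound {T t u v : ℝ} (hT : 0 < T) (ht : t ∈ Set.Icc (0:ℝ) T) (huv : u ≠ v)
    (hle : |u| ≤ |v|) :
    ‖phi t (2*u) - phi t (2*v)‖ ≤ 8*(1+T)^2*|u-v| / ((1+|u|)*(1+|u-v|)) := by
  obtain ⟨ht0, htT⟩ := ht
  set a := |u| with ha
  set b := |v| with hb
  set d := |u - v| with hdd
  have hd : 0 < d := abs_pos.mpr (sub_ne_zero.mpr huv)
  have ha0 : 0 ≤ a := abs_nonneg u
  have hb0 : 0 ≤ b := abs_nonneg v
  have hT1 : (1:ℝ) ≤ (1+T)^2 := by nlinarith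
  rcases le_or_gt a 1 with hA | hA
  · rcases le_or_gt d 1 with hD | hD
    · -- small a, small d : Lipschitz bound
      calc ‖phi t (2*u) - phi t (2*v)‖ ≤ t ^ 2 * |2*u - 2*v| := phi_lip ht0 _ _
        _ = 2 * t^2 * d := by rw [show 2*u - 2*v = 2*(u-v) by ring, abs_mul]; simp [hdd]; ring
        _ ≤ 8*(1+T)^2*d / ((1+a)*(1+d)) := by
            rw [le_div_iff₀ (by positivity)]
            have ht2 : t^2 ≤ (1+T)^2 := by nlinarith
            have hX : (1+a)*(1+d) ≤ 4 := by nlinarith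
            nlinarith [mul_le_mul_of_nonneg_right
              (mul_le_mul ht2 hX (by positivity) (by positivity)) hd.le]
    · -- small a, large d : uniform bound 2t
      calc ‖phi t (2*u) - phi t (2*v)‖
          ≤ ‖phi t (2*u)‖ + ‖phi t (2*v)‖ := by
            exact norm_sub_le _ _
        _ ≤ t + t := add_le_add (phi_abs_le ht0 _) (phi_abs_le ht0 _)
        _ ≤ 8*(1+T)^2*d / ((1+a)*(1+d)) := by
            rw [le_div_iff₀ (by positivity)]
            have hX : (1+a)*(1+d) ≤ 4*d := by nlinarith
            have htT2 : t ≤ (1+T)^2 := by nlinarith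
            nlinarith [mul_le_mul_of_nonneg_left hX ht0,
              mul_le_mul_of_nonneg_right htT2 hd.le]
  · -- a > 1 : u, v ≠ 0
    have hab : 1 < b := lt_of_lt_of_le hA hle
    have hu : u ≠ 0 := fun h => by simp [ha, h] at hA; linarith
    have hv : v ≠ 0 := fun h => by simp [hb, h] at hab; linarith
    have hu2 : (2*u : ℝ) ≠ 0 := by simpa using hu
    have hv2 : (2*v : ℝ) ≠ 0 := by simpa using hv
    rcases le_or_gt d 1 with hD | hD
    · -- large a, small d : decomposition bound
      have hdec := phi_decomp ht0 hu2 hv2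
      have e1 : |2*u - 2*v| = 2*d := by rw [show 2*u-2*v = 2*(u-v) by ring, abs_mul]; simp [hdd]
      have e2 : |(2*u : ℝ)| = 2*a := by rw [abs_mul]; simp [ha]
      have e3 : |(2*v : ℝ)| = 2*b := by rw [abs_mul]; simp [hb]
      rw [e1, e2, e3] at hdec
      have hstep : 2*(2*d)/((2*a)*(2*b)) + t*(2*d)/(2*b) ≤ (1+T)*d/a := by
        have h1 : 2*(2*d)/((2*a)*(2*b)) ≤ d/a := by
          rw [div_le_div_iff₀ (by positivity) (by positivity)]
          nlinarith [mul_nonneg (mul_nonneg hd.le ha0) (by linarith : (0:ℝ) ≤ b - 1)]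
        have h2 : t*(2*d)/(2*b) ≤ T*d/a := by
          rw [div_le_div_iff₀ (by positivity) (by positivity)]
          nlinarith [mul_le_mul_of_nonneg_left hle (mul_nonneg ht0 hd.le),
            mul_le_mul_of_nonneg_right htT (mul_nonneg hd.le ha0)]
        calc 2*(2*d)/((2*a)*(2*b)) + t*(2*d)/(2*b) ≤ d/a + T*d/a := add_le_add h1 h2
          _ = (1+T)*d/a := by ring
      refine hdec.trans (hstep.trans ?_)
      rw [div_le_div_iff₀ (by positivity) (by positivity)]
      have hX : (1+a)*(1+d) ≤ 4*a := by nlinarith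
      nlinarith [mul_le_mul_of_nonneg_left hX (by positivity : (0:ℝ) ≤ (1+T)*d),
        mul_nonneg (mul_nonneg ha0 hd.le) (by nlinarith : (0:ℝ) ≤ 2*(1+T)^2 - (1+T))]
    · -- large a, large d : decay bound
      have h1 : ‖phi t (2*u) - phi t (2*v)‖
          ≤ 2/(2*a) + 2/(2*b) := by
        calc ‖phi t (2*u) - phi t (2*v)‖
            ≤ ‖phi t (2*u)‖ + ‖phi t (2*v)‖ := by
              exact norm_sub_le _ _
          _ ≤ 2/|(2*u:ℝ)| + 2/|(2*v:ℝ)| := add_le_add (phi_abs_le' hu2) (phi_abs_le' hv2)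
          _ = 2/(2*a) + 2/(2*b) := by
              rw [abs_mul, abs_mul]; simp [ha, hb]
      have h2 : 2/(2*a) + 2/(2*b) ≤ 2/a := by
        have : 2/(2*b) ≤ 2/(2*a) := by
          apply div_le_div_of_nonneg_left (by norm_num) (by linarith) (by linarith)
        calc 2/(2*a) + 2/(2*b) ≤ 2/(2*a) + 2/(2*a) := by linarith
          _ = 2/a := by field_simp; ring
      refine h1.trans (h2.trans ?_)
      rw [div_le_div_iff₀ (by positivity) (by positivity)]
      nlinarith [mul_pos (lt_trans one_pos hA) hd, sq_nonneg (1+T),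
        mul_nonneg ha0 hd.le, mul_le_mul hA.le hD.le one_pos.le ha0]

theorem stmt_7 (T : ℝ) (hT : 0 < T) :
    ∃ C : ℝ, ∀ t ∈ Set.Icc (0 : ℝ) T, ∀ u v : ℝ, u ≠ v →
      ‖(if (2 * u) = 0 then -Complex.I * t
          else (1 - Complex.exp (Complex.I * t * (2 * u))) / (2 * u))
        - (if (2 * v) = 0 then -Complex.I * t
          else (1 - Complex.exp (Complex.I * t * (2 * v))) / (2 * v))‖ / (2 * |u - v|) ≤
      C * (1 / (1 + |u|) + 1 / (1 + |v|)) * (1 / (1 + |u - v|)) := by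
  refine ⟨4*(1+T)^2, fun t ht u v huv => ?_⟩
  have e : ∀ w : ℝ, (if (2 * w) = 0 then -Complex.I * (t:ℂ)
      else (1 - Complex.exp (Complex.I * t * (2 * w))) / (2 * w)) = phi t (2*w) := by
    intro w
    by_cases h : (2*w : ℝ) = 0
    · rw [if_pos h, phi, if_pos h]
    · rw [if_neg h, phi, if_neg h]; norm_cast
  rw [e u, e v]
  have hd : 0 < |u - v| := abs_pos.mpr (sub_ne_zero.mpr huv)
  have key : ‖phi t (2*u) - phi t (2*v)‖
      ≤ 4*(1+T)^2 * (1/(1+|u|) + 1/(1+|v|)) * (1/(1+|u-v|)) * (2*|u-v|) := by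
    rcases le_total |u| |v| with h | h
    · refine (key_bound hT ht huv h).trans ?_
      have heq : 8*(1+T)^2*|u-v| / ((1+|u|)*(1+|u-v|))
          = 4*(1+T)^2 * (1/(1+|u|)) * (1/(1+|u-v|)) * (2*|u-v|) := by
        field_simp
        ring
      rw [heq]
      gcongr
      exact le_add_of_nonneg_right (by positivity)
    · have hsym : ‖phi t (2*u) - phi t (2*v)‖
          = ‖phi t (2*v) - phi t (2*u)‖ := by
        rw [norm_sub_rev]
      rw [hsym]
      refine (key_bound hT ht (Ne.symm huv) h).trans ?_
      rw [abs_sub_comm v u]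
      have heq : 8*(1+T)^2*|u-v| / ((1+|v|)*(1+|u-v|))
          = 4*(1+T)^2 * (1/(1+|v|)) * (1/(1+|u-v|)) * (2*|u-v|) := by
        field_simp
        ring
      rw [heq]
      gcongr
      exact le_add_of_nonneg_left (by positivity)
  rw [div_le_iff₀ (by positivity)]
  exact key
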